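/- Let u, v, w be vertices of a Z^n-quiver. The following are equivalent: (1) there is an admissible path from u to w passing through v; (2) the concatenation of every admissible path from u to v with every admissible path from v to w is admissible. Moreover these imply: (3) if v ≠ w then no path from u to v through w is admissible, and (4) if u ≠ v then no path from v to w through u is admissible. If v and w are neighbors, (3) is equivalent to (1); if u and v are neighbors, (4) is equivalent to (1). -/

import Mathlib

open CategoryTheory CategoryTheory.Limits

universe u v

/-- A quiver with arrows partitioned into `n+1` arrow types. -/
structure TypedQuiver (n : ℕ) where
  V : Type
  E : Type
  src : E → V
  tgt : E → V
  typ : E → Fin (n + 1)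

namespace TypedQuiver

variable {n : ℕ}

/-- Paths in a typed quiver. -/
inductive Path (Q : TypedQuiver n) : Q.V → Q.V → Type where
  | nil (v : Q.V) : Path Q v v
  | cons {u : Q.V} (e : Q.E) (γ : Path Q u (Q.src e)) : Path Q u (Q.tgt e)

namespace Path

variable {Q : TypedQuiver n}

/-- Length of a path. -/
def length : ∀ {u w : Q.V}, Q.Path u w → ℕ
  | _, _, nil _ => 0
  | _, _, cons _ γ => length γ + 1

/-- The number of arrows of a given type in a path. -/
def count : ∀ {u w : Q.V}, Q.Path u w → Fin (n + 1) → ℕ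
  | _, _, nil _, _ => 0
  | _, _, cons e γ, t => count γ t + (if Q.typ e = t then 1 else 0)

/-- Concatenation of paths. -/
def comp : ∀ {u w x : Q.V}, Q.Path u w → Q.Path w x → Q.Path u x
  | _, _, _, γ, nil _ => γ
  | _, _, _, γ, cons e δ => cons e (comp γ δ)

/-- A path is admissible if some arrow type does not occur in it. -/
def Admissible {u w : Q.V} (γ : Q.Path u w) : Prop := ∃ t, γ.count t = 0

/-- A path is simple if each arrow type occurs at most once. -/
def Simple {u w : Q.V} (γ : Q.Path u w) : Prop := ∀ t, γ.count t ≤ 1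

/-- A maximal simple path: each arrow type occurs exactly once. -/
def MaximalSimple {u w : Q.V} (γ : Q.Path u w) : Prop := ∀ t, γ.count t = 1

/-- The essential type of a path: the set of arrow types occurring in it. -/
def essType {u w : Q.V} (γ : Q.Path u w) : Set (Fin (n + 1)) := {t | 0 < γ.count t}

end Path

/-- A `ℤⁿ`-structure on a typed quiver. -/
structure IsZn (Q : TypedQuiver n) : Prop where
  npos : 0 < n
  nonempty : Nonempty Q.V
  unique_out : ∀ (v : Q.V) (t : Fin (n + 1)), ∃! e : Q.E, Q.src e = v ∧ Q.typ e = t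
  connected : ∀ u w : Q.V, ∃ γ : Q.Path u w, γ.Admissible
  circuit : ∀ (u w : Q.V) (γ : Q.Path u w), γ.MaximalSimple → u = w
  same_type : ∀ (u w x : Q.V) (γ : Q.Path u w) (μ : Q.Path u x),
      γ.Admissible → μ.Admissible → (w = x ↔ γ.count = μ.count)

/-- Two distinct vertices are neighbors if an admissible simple path connects them. -/
def Neighbors (Q : TypedQuiver n) (u w : Q.V) : Prop :=
  u ≠ w ∧ ∃ γ : Q.Path u w, γ.Admissible ∧ γ.Simple

/-- The hull of a set of vertices. -/
def hull (Q : TypedQuiver n) (H : Set Q.V) : Set Q.V :=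
  {v | ∀ t : Fin (n + 1), ∃ z ∈ H, ∃ γ : Q.Path z v, γ.count t = 0}

/-- A representation of a typed quiver in a category. -/
structure Rep (Q : TypedQuiver n) (C : Type u) [Category.{v} C] where
  obj : Q.V → C
  map : ∀ e : Q.E, obj (Q.src e) ⟶ obj (Q.tgt e)

namespace Rep

variable {Q : TypedQuiver n} {C : Type u} [Category.{v} C]

/-- The composition of the maps of a representation along a path. -/
def mapPath (𝔙 : Q.Rep C) : ∀ {u w : Q.V}, Q.Path u w → (𝔙.obj u ⟶ 𝔙.obj w)
  | _, _, .nil _ => 𝟙 _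
  | _, _, .cons e γ => mapPath 𝔙 γ ≫ 𝔙.map e

end Rep

/-- A weakly linked net over a `ℤⁿ`-quiver. -/
structure IsWeaklyLinked (k : Type) [Field k] {Q : TypedQuiver n} {C : Type u}
    [Category.{v} C] [Preadditive C] [CategoryTheory.Linear k C] (𝔙 : Q.Rep C) : Prop where
  scalar : ∀ (u w : Q.V) (γ₁ γ₂ : Q.Path u w), γ₂.Admissible →
      ∃ c : k, c ≠ 0 ∧ 𝔙.mapPath γ₁ = c • 𝔙.mapPath γ₂
  circuit : ∀ (u w : Q.V) (γ : Q.Path u w), γ.MaximalSimple → 𝔙.mapPath γ = 0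

section Abelian

variable {Q : TypedQuiver n} {C : Type u} [Category.{v} C] [Abelian C]

/-- A linked net: kernels along admissible paths with disjoint essential types meet trivially. -/
def IsLinked (𝔙 : Q.Rep C) : Prop :=
  ∀ (u w x : Q.V) (γ₁ : Q.Path u w) (γ₂ : Q.Path u x), γ₁.Admissible → γ₂.Admissible →
    γ₁.essType ∩ γ₂.essType = ∅ →
    kernelSubobject (𝔙.mapPath γ₁) ⊓ kernelSubobject (𝔙.mapPath γ₂) = ⊥

/-- Exactness: `Ker φ^u_w = Im φ^w_u` for neighboring vertices. -/
def IsExact (𝔙 : Q.Rep C) : Prop :=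
  ∀ (u w : Q.V), Q.Neighbors u w → ∀ (γ : Q.Path u w) (μ : Q.Path w u),
    γ.Admissible → μ.Admissible →
    kernelSubobject (𝔙.mapPath γ) = imageSubobject (𝔙.mapPath μ)

/-- Binary: each associated map is zero or a monomorphism. -/
def IsBinary (𝔙 : Q.Rep C) : Prop :=
  ∀ (u w : Q.V) (γ : Q.Path u w), 𝔙.mapPath γ = 0 ∨ Mono (𝔙.mapPath γ)

/-- Pure: each epimorphism among the associated maps is an isomorphism. -/
def IsPure (𝔙 : Q.Rep C) : Prop :=
  ∀ (u w : Q.V) (γ : Q.Path u w), Epi (𝔙.mapPath γ) → IsIso (𝔙.mapPath γ)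

/-- Locally finite: compositions along long enough arriving paths vanish. -/
def LocallyFinite (𝔙 : Q.Rep C) : Prop :=
  ∀ v : Q.V, ∃ ℓ : ℕ, ∀ (u : Q.V) (γ : Q.Path u v), ℓ < γ.length → 𝔙.mapPath γ = 0

/-- Faithfully generated by a vertex `w`: `φ^w_v` is an isomorphism for every `v`. -/
def FaithfullyGeneratedBy (𝔙 : Q.Rep C) (w : Q.V) : Prop :=
  ∀ (v : Q.V) (γ : Q.Path w v), γ.Admissible → IsIso (𝔙.mapPath γ)

/-- Generated by a set `H`: the images of compositions along paths from `H` to `v` sum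
to the whole object at `v` (stated via upper bounds of subobjects). -/
def GeneratedBy (𝔙 : Q.Rep C) (H : Set Q.V) : Prop :=
  ∀ v : Q.V, ∀ W : Subobject (𝔙.obj v),
    (∀ z ∈ H, ∀ γ : Q.Path z v, imageSubobject (𝔙.mapPath γ) ≤ W) → W = ⊤

/-- 1-generated by a set `H`. -/
def OneGeneratedBy (𝔙 : Q.Rep C) (H : Set Q.V) : Prop :=
  ∀ v : Q.V, ∃ w ∈ H, ∃ γ : Q.Path w v, γ.Admissible ∧ Epi (𝔙.mapPath γ)

/-- A subobject-valued sum being everything, stated via upper bounds. -/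
def SumTop {X : C} (S : Set (Subobject X)) : Prop :=
  ∀ W : Subobject X, (∀ s ∈ S, s ≤ W) → W = ⊤

/-- A primitive vertex for a net: the images of the maps of arrows arriving at `w` do
not sum to the whole object. -/
def Primitive (𝔙 : Q.Rep C) (w : Q.V) : Prop :=
  ¬ SumTop {s : Subobject (𝔙.obj w) | ∃ (e : Q.E) (h : Q.tgt e = w),
      s = imageSubobject (𝔙.map e ≫ eqToHom (congrArg 𝔙.obj h))}

/-- The intersection property at a vertex `v`, where `K v I` denotes `Ker φ^v_I`. -/
def IntersectionProp (𝔙 : Q.Rep C)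
    (K : ∀ v : Q.V, Set (Fin (n + 1)) → Subobject (𝔙.obj v)) (v : Q.V) : Prop :=
  ∀ (m : ℕ) (I : Fin (m + 1) → Set (Fin (n + 1))),
    (Finset.univ.sup fun ℓ : Fin m => K v (I ℓ.succ)) ⊓ K v (I 0)
      = Finset.univ.sup fun ℓ : Fin m => K v (I ℓ.succ ∩ I 0)

end Abelian

end TypedQuiver
namespace TypedQuiver

variable {n : ℕ} {Q : TypedQuiver n}

theorem Path.count_comp {u w x : Q.V} (γ : Q.Path u w) (δ : Q.Path w x)
    (t : Fin (n + 1)) : (γ.comp δ).count t = γ.count t + δ.count t := by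
  induction δ with
  | nil => simp [Path.comp, Path.count]
  | cons e δ ih => simp [Path.comp, Path.count, ih]; omega

/-- The unique arrow of type `t` leaving `x`. -/
noncomputable def IsZn.step (hQ : Q.IsZn) (x : Q.V) (t : Fin (n + 1)) : Q.E :=
  (hQ.unique_out x t).exists.choose

theorem IsZn.step_src (hQ : Q.IsZn) (x : Q.V) (t : Fin (n + 1)) :
    Q.src (hQ.step x t) = x := (hQ.unique_out x t).exists.choose_spec.1

theorem IsZn.step_typ (hQ : Q.IsZn) (x : Q.V) (t : Fin (n + 1)) :
    Q.typ (hQ.step x t) = t := (hQ.unique_out x t).exists.choose_spec.2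

theorem IsZn.step_unique (hQ : Q.IsZn) {x : Q.V} {t : Fin (n + 1)} {e : Q.E}
    (h1 : Q.src e = x) (h2 : Q.typ e = t) : e = hQ.step x t := by
  obtain ⟨e', he', hu⟩ := hQ.unique_out x t
  rw [hu e ⟨h1, h2⟩, hu (hQ.step x t) ⟨hQ.step_src x t, hQ.step_typ x t⟩]

/-- Follow a list of arrow types from a vertex. -/
noncomputable def IsZn.follow (hQ : Q.IsZn) : Q.V → List (Fin (n + 1)) → Q.V
  | x, [] => x
  | x, t :: L => hQ.follow (Q.tgt (hQ.step x t)) L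

theorem IsZn.follow_append (hQ : Q.IsZn) :
    ∀ (L₁ L₂ : List (Fin (n + 1))) (x : Q.V),
      hQ.follow x (L₁ ++ L₂) = hQ.follow (hQ.follow x L₁) L₂
  | [], _, _ => rfl
  | t :: L₁, L₂, x => by
      show hQ.follow (Q.tgt (hQ.step x t)) (L₁ ++ L₂) = _
      rw [hQ.follow_append L₁ L₂]
      rfl

theorem cons_exists {x w : Q.V} (e : Q.E) (hx : Q.src e = x) (ρ : Q.Path (Q.tgt e) w) :
    ∃ ρ' : Q.Path x w, ∀ t, ρ'.count t = ρ.count t + (if Q.typ e = t then 1 else 0) := by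
  subst hx
  refine ⟨(Path.cons e (Path.nil _)).comp ρ, fun t => ?_⟩
  rw [Path.count_comp]
  simp only [Path.count]
  omega

theorem IsZn.follow_path (hQ : Q.IsZn) : ∀ (L : List (Fin (n + 1))) (x : Q.V),
    ∃ ρ : Q.Path x (hQ.follow x L), ∀ t, ρ.count t = L.count t
  | [], x => ⟨Path.nil x, fun t => by simp [Path.count]; exact Path.count.eq_1 x t⟩
  | s :: L, x => by
      obtain ⟨ρ, hρ⟩ := hQ.follow_path L (Q.tgt (hQ.step x s))
      obtain ⟨ρ', hρ'⟩ := cons_exists (hQ.step x s) (hQ.step_src x s) ρ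
      refine ⟨ρ', fun t => ?_⟩
      refine (hρ' t).trans ?_
      rw [hρ t, hQ.step_typ x s, List.count_cons]
      simp only [beq_iff_eq]

theorem IsZn.follow_swap (hQ : Q.IsZn) (x : Q.V) (s t : Fin (n + 1)) :
    hQ.follow x [s, t] = hQ.follow x [t, s] := by
  rcases eq_or_ne s t with rfl | hst
  · rfl
  obtain ⟨ρ₁, h₁⟩ := hQ.follow_path [s, t] x
  obtain ⟨ρ₂, h₂⟩ := hQ.follow_path [t, s] x
  have hcount : ∀ r, ([s, t] : List _).count r = ([t, s] : List _).count r := by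
    intro r
    simp only [List.count_cons, List.count_nil, beq_iff_eq]
    omega
  by_cases h : ∃ r, r ≠ s ∧ r ≠ t
  · obtain ⟨r, hrs, hrt⟩ := h
    have hz : ([s, t] : List _).count r = 0 := by
      simp [List.count_cons, Ne.symm hrs, Ne.symm hrt]
    exact (hQ.same_type x _ _ ρ₁ ρ₂ ⟨r, by rw [h₁, hz]⟩
      ⟨r, by rw [h₂, ← hcount r]; exact hz⟩).mpr
      (funext fun r => by rw [h₁, h₂, hcount])
  · push_neg at h
    have hone : ∀ r, ([s, t] : List _).count r = 1 := by
      intro r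
      rcases eq_or_ne r s with rfl | hrs
      · simp [List.count_cons, Ne.symm hst]
      · have := h r hrs
        subst this
        simp [List.count_cons, hst]
    have e₁ : x = hQ.follow x [s, t] := hQ.circuit x _ ρ₁ fun r => by rw [h₁, hone]
    have e₂ : x = hQ.follow x [t, s] := hQ.circuit x _ ρ₂ fun r => by rw [h₂, ← hcount, hone]
    rw [← e₁, ← e₂]

theorem IsZn.follow_perm (hQ : Q.IsZn) {L₁ L₂ : List (Fin (n + 1))} (h : L₁.Perm L₂) :
    ∀ x, hQ.follow x L₁ = hQ.follow x L₂ := by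
  induction h with
  | nil => intro x; rfl
  | cons a _ ih => intro x; exact ih _
  | swap a b L =>
      intro x
      have h1 : hQ.follow x (b :: a :: L) = hQ.follow (hQ.follow x [b, a]) L := by
        rw [show (b :: a :: L) = [b, a] ++ L from rfl, hQ.follow_append]
      have h2 : hQ.follow x (a :: b :: L) = hQ.follow (hQ.follow x [a, b]) L := by
        rw [show (a :: b :: L) = [a, b] ++ L from rfl, hQ.follow_append]
      rw [h1, h2, hQ.follow_swap x b a]
  | trans _ _ ih₁ ih₂ => intro x; rw [ih₁ x, ih₂ x]

theorem IsZn.exists_list (hQ : Q.IsZn) : ∀ {u x : Q.V} (γ : Q.Path u x),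
    ∃ L, hQ.follow u L = x ∧ ∀ t, L.count t = γ.count t
  | _, _, .nil u => ⟨[], rfl, fun t => by simp [Path.count]⟩
  | _, _, .cons e γ => by
      obtain ⟨L, hL, hc⟩ := hQ.exists_list γ
      refine ⟨L ++ [Q.typ e], ?_, fun t => ?_⟩
      · rw [hQ.follow_append, hL]
        show Q.tgt (hQ.step (Q.src e) (Q.typ e)) = Q.tgt e
        rw [← hQ.step_unique rfl rfl]
      · rw [List.count_append, hc t]
        simp only [Path.count, List.count_cons, List.count_nil, beq_iff_eq]
        omega

theorem IsZn.endpoint_unique (hQ : Q.IsZn) {u x y : Q.V} (γ : Q.Path u x) (μ : Q.Path u y)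
    (h : ∀ t, γ.count t = μ.count t) : x = y := by
  obtain ⟨L₁, hL₁, hc₁⟩ := hQ.exists_list γ
  obtain ⟨L₂, hL₂, hc₂⟩ := hQ.exists_list μ
  have hp : L₁.Perm L₂ := List.perm_iff_count.mpr fun t => by rw [hc₁, hc₂, h]
  rw [← hL₁, ← hL₂, hQ.follow_perm hp]

theorem count_flatMap_replicate (c : Fin (n + 1) → ℕ) (t : Fin (n + 1)) :
    ∀ l : List (Fin (n + 1)), l.Nodup →
      (l.flatMap fun s => List.replicate (c s) s).count t = if t ∈ l then c t else 0
  | [], _ => by simp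
  | s :: l, hnd => by
      rw [List.flatMap_cons, List.count_append,
        count_flatMap_replicate c t l hnd.of_cons, List.count_replicate]
      rcases eq_or_ne s t with rfl | hst
      · have hs : s ∉ l := (List.nodup_cons.mp hnd).1
        simp [hs]
      · simp [hst, Ne.symm hst, List.mem_cons]

theorem IsZn.exists_path_count (hQ : Q.IsZn) (u : Q.V) (c : Fin (n + 1) → ℕ) :
    ∃ (x : Q.V) (ρ : Q.Path u x), ∀ t, ρ.count t = c t := by
  obtain ⟨ρ, hρ⟩ := hQ.follow_path ((List.finRange (n + 1)).flatMap
    fun s => List.replicate (c s) s) u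
  refine ⟨_, ρ, fun t => ?_⟩
  rw [hρ, count_flatMap_replicate c t _ (List.nodup_finRange _)]
  simp [List.mem_finRange]

theorem IsZn.endpoint_shift (hQ : Q.IsZn) {u x y : Q.V} (ρ : Q.Path u x) (μ : Q.Path u y)
    (h : ∀ t, ρ.count t + 1 = μ.count t) : x = y := by
  obtain ⟨z, lp, hl⟩ := hQ.exists_path_count x fun _ => 1
  have hxz : x = z := hQ.circuit x z lp fun t => hl t
  subst hxz
  exact hQ.endpoint_unique (ρ.comp lp) μ fun t => by rw [Path.count_comp, hl, h]

theorem IsZn.eq_of_count_zero (hQ : Q.IsZn) {u x : Q.V} (γ : Q.Path u x)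
    (h : ∀ t, γ.count t = 0) : u = x :=
  ((hQ.same_type u x u γ (Path.nil u) ⟨0, h 0⟩ ⟨0, by simp [Path.count]⟩).mpr
    (funext fun t => by simp [Path.count, h t])).symm

theorem IsZn.adm_count_eq (hQ : Q.IsZn) {u x : Q.V} (γ δ : Q.Path u x)
    (hγ : γ.Admissible) (hδ : δ.Admissible) : γ.count = δ.count :=
  (hQ.same_type u x x γ δ hγ hδ).mp rfl

end TypedQuiver
open TypedQuiver in
/-- For vertices `u, v, w` of a `ℤⁿ`-quiver: (1) existence of an admissible
path from `u` to `w` through `v` is equivalent to (2) every concatenation of admissible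
paths `u → v` and `v → w` being admissible; these imply (3) if `v ≠ w` no path from `u`
to `v` through `w` is admissible, and (4) if `u ≠ v` no path from `v` to `w` through `u`
is admissible. If `v` and `w` are neighbors, (3) is equivalent to (1); if `u` and `v`
are neighbors, (4) is equivalent to (1). -/
theorem stmt6 {n : ℕ} (Q : TypedQuiver n) (hQ : Q.IsZn) (u v w : Q.V) :
    ((∃ (γ₁ : Q.Path u v) (γ₂ : Q.Path v w), (γ₁.comp γ₂).Admissible) ↔
      (∀ (γ₁ : Q.Path u v) (γ₂ : Q.Path v w), γ₁.Admissible → γ₂.Admissible →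
        (γ₁.comp γ₂).Admissible)) ∧
    ((∃ (γ₁ : Q.Path u v) (γ₂ : Q.Path v w), (γ₁.comp γ₂).Admissible) →
      ((v ≠ w → ∀ (γ : Q.Path u w) (μ : Q.Path w v), ¬ (γ.comp μ).Admissible) ∧
       (u ≠ v → ∀ (γ : Q.Path v u) (μ : Q.Path u w), ¬ (γ.comp μ).Admissible))) ∧
    (Q.Neighbors v w →
      ((v ≠ w → ∀ (γ : Q.Path u w) (μ : Q.Path w v), ¬ (γ.comp μ).Admissible) ↔
        (∃ (γ₁ : Q.Path u v) (γ₂ : Q.Path v w), (γ₁.comp γ₂).Admissible))) ∧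
    (Q.Neighbors u v →
      ((u ≠ v → ∀ (γ : Q.Path v u) (μ : Q.Path u w), ¬ (γ.comp μ).Admissible) ↔
        (∃ (γ₁ : Q.Path u v) (γ₂ : Q.Path v w), (γ₁.comp γ₂).Admissible))) := by
  classical
  -- basic consequences
  have key12 : (∃ (γ₁ : Q.Path u v) (γ₂ : Q.Path v w), (γ₁.comp γ₂).Admissible) →
      (∀ (γ₁ : Q.Path u v) (γ₂ : Q.Path v w), γ₁.Admissible → γ₂.Admissible →
        (γ₁.comp γ₂).Admissible) := by
    rintro ⟨γ₁, γ₂, t, ht⟩ δ₁ δ₂ hδ₁ hδ₂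
    rw [Path.count_comp] at ht
    have hγ₁ : γ₁.Admissible := ⟨t, by omega⟩
    have hγ₂ : γ₂.Admissible := ⟨t, by omega⟩
    have e₁ := hQ.adm_count_eq γ₁ δ₁ hγ₁ hδ₁
    have e₂ := hQ.adm_count_eq γ₂ δ₂ hγ₂ hδ₂
    refine ⟨t, ?_⟩
    rw [Path.count_comp, ← congrFun e₁ t, ← congrFun e₂ t]
    omega
  have key34 : (∃ (γ₁ : Q.Path u v) (γ₂ : Q.Path v w), (γ₁.comp γ₂).Admissible) →
      ((v ≠ w → ∀ (γ : Q.Path u w) (μ : Q.Path w v), ¬ (γ.comp μ).Admissible) ∧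
       (u ≠ v → ∀ (γ : Q.Path v u) (μ : Q.Path u w), ¬ (γ.comp μ).Admissible)) := by
    rintro ⟨γ₁, γ₂, hcomp⟩
    obtain ⟨t₀, ht₀⟩ := hcomp
    rw [Path.count_comp] at ht₀
    have hγ₁ : γ₁.Admissible := ⟨t₀, by omega⟩
    have hγ₂ : γ₂.Admissible := ⟨t₀, by omega⟩
    have hcomp' : (γ₁.comp γ₂).Admissible := ⟨t₀, by rw [Path.count_comp]; omega⟩
    constructor
    · intro hvw γ μ ⟨s, hs⟩
      rw [Path.count_comp] at hs
      have hγ : γ.Admissible := ⟨s, by omega⟩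
      have hγμ : (γ.comp μ).Admissible := ⟨s, by rw [Path.count_comp]; omega⟩
      have e₁ := hQ.adm_count_eq γ (γ₁.comp γ₂) hγ hcomp'
      have e₂ := hQ.adm_count_eq γ₁ (γ.comp μ) hγ₁ hγμ
      have hz : ∀ t, γ₂.count t = 0 := by
        intro t
        have h1 := congrFun e₁ t
        have h2 := congrFun e₂ t
        rw [Path.count_comp] at h1 h2
        omega
      exact hvw (hQ.eq_of_count_zero γ₂ hz)
    · intro huv γ μ ⟨s, hs⟩
      rw [Path.count_comp] at hs
      have hμ : μ.Admissible := ⟨s, by omega⟩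
      have hγμ : (γ.comp μ).Admissible := ⟨s, by rw [Path.count_comp]; omega⟩
      have e₁ := hQ.adm_count_eq μ (γ₁.comp γ₂) hμ hcomp'
      have e₂ := hQ.adm_count_eq (γ.comp μ) γ₂ hγμ hγ₂
      have hz : ∀ t, γ₁.count t = 0 := by
        intro t
        have h1 := congrFun e₁ t
        have h2 := congrFun e₂ t
        rw [Path.count_comp] at h1 h2
        omega
      exact huv (hQ.eq_of_count_zero γ₁ hz)
  refine ⟨⟨key12, fun h => ?_⟩, key34, fun hnb => ⟨fun h3 => ?_, fun h1 => (key34 h1).1⟩,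
    fun hnb => ⟨fun h4 => ?_, fun h1 => (key34 h1).2⟩⟩
  · obtain ⟨γ₁, h₁⟩ := hQ.connected u v
    obtain ⟨γ₂, h₂⟩ := hQ.connected v w
    exact ⟨γ₁, γ₂, h γ₁ γ₂ h₁ h₂⟩
  · -- Neighbors v w, (3) → (1)
    obtain ⟨hvw, σ, hσadm, hσsimp⟩ := hnb
    obtain ⟨α, hαadm⟩ := hQ.connected u v
    by_cases hcase : ∃ t, σ.count t = 0 ∧ α.count t = 0
    · obtain ⟨t, hσt, hαt⟩ := hcase
      exact ⟨α, σ, t, by rw [Path.count_comp]; omega⟩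
    · push_neg at hcase
      obtain ⟨t₂, ht₂⟩ := hαadm
      have hσt₂ : σ.count t₂ = 1 := by
        have h1 := hσsimp t₂
        have h2 : σ.count t₂ = 0 → α.count t₂ ≠ 0 := hcase t₂
        omega
      have hge : ∀ t, 1 ≤ α.count t + σ.count t := by
        intro t
        have := hcase t
        omega
      obtain ⟨x, ρ, hρ⟩ := hQ.exists_path_count u fun t => α.count t + σ.count t - 1
      have hxw : w = x := by
        refine (hQ.endpoint_shift ρ (α.comp σ) fun t => ?_).symm
        rw [Path.count_comp, hρ t]
        have := hge t
        omega
      subst hxw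
      obtain ⟨y, τ, hτ⟩ := hQ.exists_path_count w fun t => 1 - σ.count t
      have hvy : v = y := by
        refine hQ.circuit v y (σ.comp τ) fun t => ?_
        rw [Path.count_comp, hτ t]
        have := hσsimp t
        omega
      subst hvy
      exact absurd ⟨t₂, by rw [Path.count_comp, hρ t₂, hτ t₂, ht₂, hσt₂]⟩ (h3 hvw ρ τ)
  · -- Neighbors u v, (4) → (1)
    obtain ⟨huv, σ, hσadm, hσsimp⟩ := hnb
    obtain ⟨γ, hγadm⟩ := hQ.connected v w
    by_cases hcase : ∃ t, σ.count t = 0 ∧ γ.count t = 0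
    · obtain ⟨t, hσt, hγt⟩ := hcase
      exact ⟨σ, γ, t, by rw [Path.count_comp]; omega⟩
    · push_neg at hcase
      obtain ⟨t₂, ht₂⟩ := hγadm
      have hσt₂ : σ.count t₂ = 1 := by
        have h1 := hσsimp t₂
        have h2 := hcase t₂
        omega
      have hge : ∀ t, 1 ≤ σ.count t + γ.count t := by
        intro t
        have := hcase t
        omega
      obtain ⟨x, ρ, hρ⟩ := hQ.exists_path_count u fun t => σ.count t + γ.count t - 1
      have hxw : w = x := by
        refine (hQ.endpoint_shift ρ (σ.comp γ) fun t => ?_).symm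
        rw [Path.count_comp, hρ t]
        have := hge t
        omega
      subst hxw
      obtain ⟨y, τ, hτ⟩ := hQ.exists_path_count v fun t => 1 - σ.count t
      have huy : u = y := by
        refine hQ.circuit u y (σ.comp τ) fun t => ?_
        rw [Path.count_comp, hτ t]
        have := hσsimp t
        omega
      subst huy
      exact absurd ⟨t₂, by rw [Path.count_comp, hρ t₂, hτ t₂, ht₂, hσt₂]⟩ (h4 huv τ ρ)
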